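/- Let s ≥ 1 and k ≥ 3 be fixed integers and let F be a fixed k-critical graph on f vertices. There exist a constant C' = C'(F,s) such that for all sufficiently large n the following holds: if G is the graph obtained from the Turán graph T_{k−1}(n) by adding s pairwise disjoint edges inside one part, then the number of copies of F in G satisfies N_F(G) ≤ s·c(n,F) + C'·n^{f−3}. Consequently the lower bound N_F(G) ≥ s·c(n,F) − C·n^{f−3} is tight up to the error term. -/

import Mathlib

open Finset SimpleGraph

/-- Number of `k`-cliques of a graph. -/
noncomputable def cliqueCount {V : Type*} (G : SimpleGraph V) (k : ℕ) : ℕ :=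
  Nat.card {T : Finset V // G.IsNClique k T}

/-- `K_k`-covering number: minimum size of a vertex set meeting every `k`-clique. -/
noncomputable def cliqueCover {V : Type*} [Fintype V] [DecidableEq V]
    (G : SimpleGraph V) (k : ℕ) : ℕ :=
  sInf {m | ∃ S : Finset V, S.card = m ∧ ∀ T : Finset V, G.IsNClique k T → ∃ v ∈ T, v ∈ S}

/-- Number of edges of a graph. -/
noncomputable def edgeCount {V : Type*} (G : SimpleGraph V) : ℕ := Nat.card G.edgeSet

/-- Number of edges of the Turán graph `T_r(n)`. -/
noncomputable def turanEdges (r n : ℕ) : ℕ := edgeCount (turanGraph n r)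

/-- `e(n) = n² - 4⌊n²/4⌋`. -/
def eDef (n : ℕ) : ℕ := n ^ 2 - 4 * (n ^ 2 / 4)

/-- `m_{s,t}(n)`: least `m` such that `4s - 4t - 4m + e(n)` is a perfect square. -/
noncomputable def mst (s t n : ℕ) : ℕ :=
  sInf {m : ℕ | ∃ p : ℕ, (p : ℤ) ^ 2 = 4 * s - 4 * t - 4 * m + eDef n}

/-- `R₃(n,s,t) = (4s - 4t - 4m_{s,t}(n) + e(n))^{1/2}`. -/
noncomputable def R3 (s t n : ℕ) : ℕ :=
  Nat.sqrt (4 * (s : ℤ) - 4 * t - 4 * mst s t n + eDef n).toNat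

/-- Number of copies of `F` in `G`: subgraphs of `G` isomorphic to `F`. -/
noncomputable def copyCount' {α V : Type*} (F : SimpleGraph α) (G : SimpleGraph V) : ℕ :=
  Nat.card {H : G.Subgraph // Nonempty (F ≃g H.coe)}

/-- `F`-covering number of `G`. -/
noncomputable def coverNumber {α V : Type*} [Fintype V] [DecidableEq V]
    (F : SimpleGraph α) (G : SimpleGraph V) : ℕ :=
  sInf {m | ∃ S : Finset V, S.card = m ∧
    ∀ H : G.Subgraph, Nonempty (F ≃g H.coe) → ∃ v ∈ H.verts, v ∈ S}

/-- A graph `F` is `k`-critical. -/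
def IsCritical {α : Type*} (k : ℕ) (F : SimpleGraph α) : Prop :=
  F.chromaticNumber = k ∧ ∃ e ∈ F.edgeSet, (F.deleteEdges {e}).chromaticNumber < k

/-- `c(n,F)`: minimum number of copies of `F` after adding one new edge to `T_{k-1}(n)`. -/
noncomputable def cnF {α : Type*} (k n : ℕ) (F : SimpleGraph α) : ℕ :=
  sInf {c | ∃ u v : Fin n, u ≠ v ∧ ¬ (turanGraph n (k - 1)).Adj u v ∧
    c = copyCount' F (turanGraph n (k - 1) ⊔ fromEdgeSet {s(u, v)})}

/-- `N_k(n,s)` from Theorem 1.3. -/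
def NkBound (k s n : ℕ) : ℕ :=
  if n % (k - 1) = 0 then s * (n / (k - 1)) ^ (k - 3) * (n / (k - 1) - 1)
  else if n % (k - 1) = 1 then s * (n / (k - 1)) ^ (k - 2) - (n / (k - 1)) ^ (k - 3)
  else s * (n / (k - 1) + 1) ^ (n % (k - 1) - 2) * (n / (k - 1)) ^ (k - n % (k - 1))

/-- `R_k(n,s,t)`. -/
noncomputable def Rk (k s t n : ℕ) : ℝ :=
  Real.sqrt ((2 * ((k : ℝ) - 1) * ((s : ℝ) - t) +
    ((k : ℝ) - 1 - (n % (k - 1) : ℕ)) * (n % (k - 1) : ℕ)) / ((k : ℝ) - 2))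

/-- `c(x₁,…,x_{k-1},F)`: copies of `F` in the complete multipartite graph with parts
`Fin (x i)` plus one edge inside part `0`. -/
noncomputable def cParts {α : Type*} (k : ℕ) (x : Fin (k - 1) → ℕ) (F : SimpleGraph α) : ℕ :=
  sInf {c | ∃ i₀ : Fin (k - 1), ∃ a b : Fin (x i₀), (i₀ : ℕ) = 0 ∧ a ≠ b ∧
    c = copyCount' F (completeMultipartiteGraph (fun i => Fin (x i)) ⊔
      fromEdgeSet {s(⟨i₀, a⟩, ⟨i₀, b⟩)})}

section AuxiliaryLemmas
open Function

section Infra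
variable {β : Type*} [Finite β]

instance subgraphFinite {V : Type*} [Finite V] {G : SimpleGraph V} : Finite G.Subgraph :=
  Finite.of_injective (fun H => (H.verts, H.Adj))
    (fun H₁ H₂ h => by
      obtain ⟨h1, h2⟩ := Prod.mk.injEq _ _ _ _ ▸ h
      exact SimpleGraph.Subgraph.ext h1 h2)

lemma nat_card_mono {P Q : β → Prop} (h : ∀ b, P b → Q b) :
    Nat.card {b // P b} ≤ Nat.card {b // Q b} := by
  apply
  Nat.card_le_card_of_injective (fun x => ⟨x.1, h x.1 x.2⟩)
    (fun a b hab => Subtype.ext (by simpa using congrArg Subtype.val hab))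

lemma nat_card_le_sum {ι : Type*} [Fintype ι] (P : β → Prop) (Q : ι → β → Prop)
    (h : ∀ b, P b → ∃ i, Q i b) :
    Nat.card {b // P b} ≤ ∑ i, Nat.card {b // Q i b} := by
  classical
  have inst : ∀ i, Fintype {b // Q i b} := fun i => Fintype.ofFinite _
  have hs : Nat.card (Σ i, {b // Q i b}) = ∑ i, Nat.card {b // Q i b} := by
    rw [Nat.card_eq_fintype_card, Fintype.card_sigma]
    exact Finset.sum_congr rfl (fun i _ => (Nat.card_eq_fintype_card).symm)
  rw [← hs]
  apply Nat.card_le_card_of_injective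
    (fun x => ⟨(h x.1 x.2).choose, ⟨x.1, (h x.1 x.2).choose_spec⟩⟩)
  intro x y hxy
  have : (x : β) = (y : β) :=
    congrArg (fun p : Σ i, {b // Q i b} => (p.2 : β)) hxy
  exact Subtype.ext this

lemma nat_card_le_add {P Q R : β → Prop} (h : ∀ b, P b → Q b ∨ R b) :
    Nat.card {b // P b} ≤ Nat.card {b // Q b} + Nat.card {b // R b} := by
  have := nat_card_le_sum P (fun i : Bool => if i then Q else R) (fun b hb => by
    rcases h b hb with h' | h'
    exacts [⟨true, by simpa using h'⟩, ⟨false, by simpa using h'⟩])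
  simpa [Fintype.sum_bool] using this

omit [Finite β] in
lemma nat_card_eq_zero_of_false {P : β → Prop} (h : ∀ b, ¬ P b) :
    Nat.card {b // P b} = 0 :=
  @Nat.card_of_isEmpty _ ⟨fun x => h x.1 x.2⟩

end Infra

section Homs
variable {α V : Type*} {F : SimpleGraph α} {G : SimpleGraph V}

/-- From an injective hom, the mapped top subgraph is an isomorphic copy. -/
lemma iso_map_top (φ : F →g G) (hφ : Function.Injective φ) :
    Nonempty (F ≃g ((⊤ : F.Subgraph).map φ).coe) := by
  have hverts : ((⊤ : F.Subgraph).map φ).verts = φ '' Set.univ := rfl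
  refine ⟨⟨(Equiv.Set.univ α).symm.trans (Equiv.Set.imageOfInjOn φ Set.univ hφ.injOn), ?_⟩⟩
  intro a b
  simp only [Equiv.trans_apply, Subgraph.coe_adj, Subgraph.map_adj, Relation.Map,
    Subgraph.top_adj]
  constructor
  · rintro ⟨a', b', hab, ha, hb⟩
    have ha' : a' = a := hφ ha
    have hb' : b' = b := hφ hb
    rwa [ha', hb'] at hab
  · intro h
    exact ⟨a, b, h, rfl, rfl⟩

lemma copies_le_homs [Finite V] [Finite α] (p : G.Subgraph → Prop) :
    Nat.card {H : G.Subgraph // Nonempty (F ≃g H.coe) ∧ p H} ≤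
      Nat.card {φ : F →g G // Function.Injective φ ∧ p ((⊤ : F.Subgraph).map φ)} := by
  apply Nat.card_le_card_of_surjective
    (fun φ => (⟨(⊤ : F.Subgraph).map φ.1, iso_map_top φ.1 φ.2.1, φ.2.2⟩ :
      {H : G.Subgraph // Nonempty (F ≃g H.coe) ∧ p H}))
  rintro ⟨H, ⟨e⟩, hp⟩
  have hinj : Function.Injective (H.hom.comp e.toHom) := by
    intro a b hab
    exact e.injective (Subtype.ext hab)
  have hmap : (⊤ : F.Subgraph).map (H.hom.comp e.toHom) = H := by
    apply SimpleGraph.Subgraph.ext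
    · ext x
      simp only [Subgraph.map_verts, Subgraph.verts_top, Set.image_univ, Set.mem_range]
      constructor
      · rintro ⟨a, rfl⟩
        exact (e a).2
      · intro hx
        refine ⟨e.symm ⟨x, hx⟩, ?_⟩
        show ((e (e.symm ⟨x, hx⟩) : H.verts) : V) = x
        rw [e.apply_symm_apply]
    · ext x y
      simp only [Subgraph.map_adj, Relation.Map, Subgraph.top_adj]
      constructor
      · rintro ⟨a, b, hab, rfl, rfl⟩
        exact (e.map_adj_iff.mpr hab : H.coe.Adj (e a) (e b))
      · intro hxy
        refine ⟨e.symm ⟨x, H.edge_vert hxy⟩, e.symm ⟨y, H.edge_vert hxy.symm⟩, ?_, ?_, ?_⟩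
        · rw [← e.map_adj_iff]
          simpa [e.apply_symm_apply] using hxy
        · show ((e (e.symm ⟨x, _⟩) : H.verts) : V) = x; rw [e.apply_symm_apply]
        · show ((e (e.symm ⟨y, _⟩) : H.verts) : V) = y; rw [e.apply_symm_apply]
  exact ⟨⟨H.hom.comp e.toHom, hinj, by rw [hmap]; exact hp⟩, Subtype.ext hmap⟩

end Homs

section ThreeVertex
variable {α : Type*} [Fintype α] {n : ℕ} {F : SimpleGraph α}

lemma prescribed_card_le (f : ℕ) (hf : Fintype.card α = f)
    (t : α × α × α) (x₁ x₂ x₃ : Fin n) (h12 : x₁ ≠ x₂) (h13 : x₁ ≠ x₃) (h23 : x₂ ≠ x₃) :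
    Nat.card {g : α → Fin n // g t.1 = x₁ ∧ g t.2.1 = x₂ ∧ g t.2.2 = x₃} ≤ n ^ (f - 3) := by
  classical
  by_cases hd : t.1 ≠ t.2.1 ∧ t.1 ≠ t.2.2 ∧ t.2.1 ≠ t.2.2
  · obtain ⟨d1, d2, d3⟩ := hd
    have hcard : Nat.card ({b : α // b ≠ t.1 ∧ b ≠ t.2.1 ∧ b ≠ t.2.2} → Fin n) = n ^ (f - 3) := by
      rw [Nat.card_fun, Nat.card_eq_fintype_card, Nat.card_eq_fintype_card, Fintype.card_fin]
      congr 1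
      have : ∀ b : α, (b ≠ t.1 ∧ b ≠ t.2.1 ∧ b ≠ t.2.2) ↔ ¬(b ∈ ({t.1, t.2.1, t.2.2} : Finset α)) := by
        intro b; simp [not_or]
      rw [Fintype.card_congr (Equiv.subtypeEquivRight this), Fintype.card_subtype_compl,
        Fintype.card_coe]
      have h3 : ({t.1, t.2.1, t.2.2} : Finset α).card = 3 := by
        rw [Finset.card_insert_of_notMem (by simp [d1, d2]),
          Finset.card_insert_of_notMem (by simp [d3]), Finset.card_singleton]
      rw [h3, hf]
    rw [← hcard]
    apply Nat.card_le_card_of_injective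
      (fun g => fun b => g.1 b.1)
    intro g g' hgg'
    apply Subtype.ext
    funext b
    by_cases hb1 : b = t.1
    · rw [hb1, g.2.1, g'.2.1]
    by_cases hb2 : b = t.2.1
    · rw [hb2, g.2.2.1, g'.2.2.1]
    by_cases hb3 : b = t.2.2
    · rw [hb3, g.2.2.2, g'.2.2.2]
    exact congrFun hgg' ⟨b, hb1, hb2, hb3⟩
  · have : ∀ g : α → Fin n, ¬(g t.1 = x₁ ∧ g t.2.1 = x₂ ∧ g t.2.2 = x₃) := by
      intro g ⟨e1, e2, e3⟩
      push_neg at hd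
      by_cases h1 : t.1 = t.2.1
      · exact h12 (by rw [← e1, ← e2, h1])
      by_cases h2 : t.1 = t.2.2
      · exact h13 (by rw [← e1, ← e3, h2])
      exact h23 (by rw [← e2, ← e3, hd h1 h2])
    rw [nat_card_eq_zero_of_false this]
    exact Nat.zero_le _

lemma copies_three_le (G : SimpleGraph (Fin n)) (f : ℕ) (hf : Fintype.card α = f)
    (x₁ x₂ x₃ : Fin n) (h12 : x₁ ≠ x₂) (h13 : x₁ ≠ x₃) (h23 : x₂ ≠ x₃) :
    Nat.card {H : G.Subgraph // Nonempty (F ≃g H.coe) ∧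
        x₁ ∈ H.verts ∧ x₂ ∈ H.verts ∧ x₃ ∈ H.verts} ≤ f ^ 3 * n ^ (f - 3) := by
  classical
  calc Nat.card {H : G.Subgraph // Nonempty (F ≃g H.coe) ∧
        x₁ ∈ H.verts ∧ x₂ ∈ H.verts ∧ x₃ ∈ H.verts}
      ≤ Nat.card {φ : F →g G // Function.Injective φ ∧
          x₁ ∈ ((⊤ : F.Subgraph).map φ).verts ∧ x₂ ∈ ((⊤ : F.Subgraph).map φ).verts ∧
          x₃ ∈ ((⊤ : F.Subgraph).map φ).verts} :=
        copies_le_homs (fun H => x₁ ∈ H.verts ∧ x₂ ∈ H.verts ∧ x₃ ∈ H.verts)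
    _ ≤ Nat.card {g : α → Fin n // x₁ ∈ Set.range g ∧ x₂ ∈ Set.range g ∧ x₃ ∈ Set.range g} := by
        apply Nat.card_le_card_of_injective (fun φ => ⟨φ.1.toFun, by
          have := φ.2.2
          simp only [Subgraph.map_verts, Subgraph.verts_top, Set.image_univ] at this
          exact this⟩)
        intro φ φ' h
        have : (φ.1 : α → Fin n) = φ'.1 := congrArg Subtype.val h
        exact Subtype.ext (DFunLike.coe_injective this)
    _ ≤ ∑ t : α × α × α, Nat.card {g : α → Fin n //
          g t.1 = x₁ ∧ g t.2.1 = x₂ ∧ g t.2.2 = x₃} := by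
        apply nat_card_le_sum
        rintro g ⟨⟨a₁, h1⟩, ⟨a₂, h2⟩, ⟨a₃, h3⟩⟩
        exact ⟨(a₁, a₂, a₃), h1, h2, h3⟩
    _ ≤ ∑ _t : α × α × α, n ^ (f - 3) :=
        Finset.sum_le_sum (fun t _ => prescribed_card_le f hf t x₁ x₂ x₃ h12 h13 h23)
    _ = f ^ 3 * n ^ (f - 3) := by
        rw [Finset.sum_const, Finset.card_univ, smul_eq_mul]
        congr 1
        simp [hf, pow_succ, pow_two]; ring
end ThreeVertex

section Classes

lemma class_card {n r : ℕ} (hr : 0 < r) (j : ℕ) (hjr : j < r) (hrn : r ≤ n) :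
    (Finset.univ.filter (fun x : Fin n => (x : ℕ) % r = j)).card = (n - j - 1) / r + 1 := by
  classical
  have hjn : j < n := lt_of_lt_of_le hjr hrn
  have key : ∀ t : ℕ, j + r * t < n ↔ t < (n - j - 1) / r + 1 := by
    intro t
    rw [Nat.lt_succ_iff, Nat.le_div_iff_mul_le hr, mul_comm]
    omega
  have e : {x : Fin n // (x : ℕ) % r = j} ≃ Fin ((n - j - 1) / r + 1) :=
    { toFun := fun x => ⟨(x : ℕ) / r, by
        apply (key ((x : ℕ) / r)).mp
        have := Nat.div_add_mod (x : ℕ) r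
        have hx := x.2
        omega⟩
      invFun := fun t => ⟨⟨j + r * t, (key t).mpr t.2⟩, by
        simp [Nat.add_mul_mod_self_left, Nat.mod_eq_of_lt hjr]⟩
      left_inv := fun x => by
        apply Subtype.ext
        apply Fin.ext
        show j + r * ((x : ℕ) / r) = (x : ℕ)
        have := Nat.div_add_mod ((x : Fin n) : ℕ) r
        have hx := x.2
        omega
      right_inv := fun t => by
        apply Fin.ext
        show (j + r * (t : ℕ)) / r = (t : ℕ)
        rw [Nat.add_mul_div_left _ _ hr, Nat.div_eq_of_lt hjr, zero_add] }
  calc (Finset.univ.filter (fun x : Fin n => (x : ℕ) % r = j)).card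
      = Fintype.card {x : Fin n // (x : ℕ) % r = j} := (Fintype.card_subtype _).symm
    _ = (n - j - 1) / r + 1 := by rw [Fintype.card_congr e, Fintype.card_fin]

end Classes

section Psi
open Equiv

lemma swap_mem {n : ℕ} (B : Finset (Fin n)) {p q s : Fin n} (hp : p ∈ B) (hq : q ∈ B)
    (hs : s ∈ B) : Equiv.swap p q s ∈ B := by
  rw [Equiv.swap_apply_def]
  split_ifs <;> assumption

lemma psi_exists {n r : ℕ} (hr : 0 < r) (hn : 5 * r ≤ n)
    (u₁ v₁ u₂ v₂ : Fin n)
    (hc1 : (u₁ : ℕ) % r = (v₁ : ℕ) % r) (hc2 : (u₂ : ℕ) % r = (v₂ : ℕ) % r)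
    (h1 : u₁ ≠ v₁) (h2 : u₂ ≠ v₂) :
    ∃ (ψ : Fin n → Fin n) (w : Fin n), w ≠ u₁ ∧ w ≠ v₁ ∧
      Set.InjOn ψ {w}ᶜ ∧ ψ u₁ = u₂ ∧ ψ v₁ = v₂ ∧
      (∀ x y : Fin n, x ≠ w → y ≠ w → (x : ℕ) % r ≠ (y : ℕ) % r →
        (ψ x : ℕ) % r ≠ (ψ y : ℕ) % r) := by
  classical
  set c : ℕ := (u₁ : ℕ) % r with hc
  set c' : ℕ := (u₂ : ℕ) % r with hc'
  have hcr : c < r := Nat.mod_lt _ hr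
  have hc'r : c' < r := Nat.mod_lt _ hr
  have hrn : r ≤ n := by omega
  set A : Finset (Fin n) := Finset.univ.filter (fun x : Fin n => (x : ℕ) % r = c) with hA
  set B : Finset (Fin n) := Finset.univ.filter (fun x : Fin n => (x : ℕ) % r = c') with hB
  have memA : ∀ x : Fin n, x ∈ A ↔ (x : ℕ) % r = c := by intro x; simp [hA]
  have memB : ∀ x : Fin n, x ∈ B ↔ (x : ℕ) % r = c' := by intro x; simp [hB]
  have cardA : A.card = (n - c - 1) / r + 1 := class_card hr c hcr hrn
  have cardB : B.card = (n - c' - 1) / r + 1 := class_card hr c' hc'r hrn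
  have hdiv : ∀ j j' : ℕ, j < r → j' < r → (n - j - 1) / r ≤ (n - j' - 1) / r + 1 := by
    intro j j' hj hj'
    have h1' : n - j - 1 ≤ (n - j' - 1) + r := by omega
    calc (n - j - 1) / r ≤ ((n - j' - 1) + r) / r := Nat.div_le_div_right h1'
      _ = (n - j' - 1) / r + 1 := Nat.add_div_right _ hr
  have hAB : A.card ≤ B.card + 1 := by
    rw [cardA, cardB]; have := hdiv c c' hcr hc'r; omega
  have hBA : B.card ≤ A.card + 1 := by
    rw [cardA, cardB]; have := hdiv c' c hc'r hcr; omega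
  have hA5 : 5 ≤ A.card := by
    rw [cardA]
    have : 4 * r ≤ n - c - 1 := by omega
    have := (Nat.le_div_iff_mul_le hr).mpr (by omega : 4 * r ≤ n - c - 1)
    omega
  have hB5 : 5 ≤ B.card := by
    rw [cardB]
    have := (Nat.le_div_iff_mul_le hr).mpr (by omega : 4 * r ≤ n - c' - 1)
    omega
  have hu₁A : u₁ ∈ A := (memA u₁).mpr rfl
  have hv₁A : v₁ ∈ A := (memA v₁).mpr hc1.symm
  have hu₂B : u₂ ∈ B := (memB u₂).mpr rfl
  have hv₂B : v₂ ∈ B := (memB v₂).mpr hc2.symm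
  -- choose w
  have hfour : ({u₁, v₁, u₂, v₂} : Finset (Fin n)).card ≤ 4 := by
    apply le_trans (Finset.card_insert_le _ _)
    have : ({v₁, u₂, v₂} : Finset (Fin n)).card ≤ 3 := by
      apply le_trans (Finset.card_insert_le _ _)
      have : ({u₂, v₂} : Finset (Fin n)).card ≤ 2 := by
        apply le_trans (Finset.card_insert_le _ _)
        simp
      omega
    omega
  set S : Finset (Fin n) := if A.card ≤ B.card then B else A with hS
  have hS5 : 5 ≤ S.card := by rw [hS]; split_ifs <;> assumption
  have hSne : (S \ ({u₁, v₁, u₂, v₂} : Finset (Fin n))).Nonempty := by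
    rw [← Finset.card_pos]
    have := Finset.le_card_sdiff ({u₁, v₁, u₂, v₂} : Finset (Fin n)) S
    omega
  obtain ⟨w, hw⟩ := hSne
  rw [Finset.mem_sdiff] at hw
  obtain ⟨hwS, hwnot⟩ := hw
  have hwu₁ : w ≠ u₁ := by intro h; exact hwnot (by simp [h])
  have hwv₁ : w ≠ v₁ := by intro h; exact hwnot (by simp [h])
  have hwu₂ : w ≠ u₂ := by intro h; exact hwnot (by simp [h])
  have hwv₂ : w ≠ v₂ := by intro h; exact hwnot (by simp [h])
  -- cardinalities for embeddings
  have hcard1 : (A.erase w).card ≤ B.card := by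
    by_cases hab : A.card ≤ B.card
    · exact le_trans (Finset.card_erase_le) hab
    · have hwA : w ∈ A := by rw [hS] at hwS; simpa [if_neg hab] using hwS
      rw [Finset.card_erase_of_mem hwA]
      omega
  have hcard2 : (B.erase w).card ≤ A.card := by
    by_cases hab : A.card ≤ B.card
    · have hwB : w ∈ B := by rw [hS] at hwS; simpa [if_pos hab] using hwS
      rw [Finset.card_erase_of_mem hwB]
      omega
    · exact le_trans (Finset.card_erase_le) (by omega)
  obtain ⟨g₀⟩ : Nonempty ((A.erase w : Finset (Fin n)) ↪ (B : Finset (Fin n))) := by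
    apply Function.Embedding.nonempty_of_card_le
    rwa [Fintype.card_coe, Fintype.card_coe]
  obtain ⟨h₀⟩ : Nonempty ((B.erase w : Finset (Fin n)) ↪ (A : Finset (Fin n))) := by
    apply Function.Embedding.nonempty_of_card_le
    rwa [Fintype.card_coe, Fintype.card_coe]
  have hu₁Aw : u₁ ∈ A.erase w := Finset.mem_erase.mpr ⟨fun h => hwu₁ h.symm, hu₁A⟩
  have hv₁Aw : v₁ ∈ A.erase w := Finset.mem_erase.mpr ⟨fun h => hwv₁ h.symm, hv₁A⟩
  set b₁ : Fin n := (g₀ ⟨u₁, hu₁Aw⟩ : Fin n) with hb₁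
  set b₂ : Fin n := (g₀ ⟨v₁, hv₁Aw⟩ : Fin n) with hb₂
  have hb₁B : b₁ ∈ B := (g₀ ⟨u₁, hu₁Aw⟩).2
  have hb₂B : b₂ ∈ B := (g₀ ⟨v₁, hv₁Aw⟩).2
  have hb12 : b₁ ≠ b₂ := by
    intro h
    have := g₀.injective (Subtype.ext h)
    exact h1 (congrArg Subtype.val this)
  set σ₁ : Equiv.Perm (Fin n) := Equiv.swap b₁ u₂ with hσ₁
  set σ₂ : Equiv.Perm (Fin n) := Equiv.swap (σ₁ b₂) v₂ with hσ₂
  set σ : Equiv.Perm (Fin n) := σ₁.trans σ₂ with hσ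
  have σB : ∀ y : Fin n, y ∈ B → σ y ∈ B := by
    intro y hy
    apply swap_mem B (swap_mem B hb₁B hu₂B hb₂B) hv₂B
    exact swap_mem B hb₁B hu₂B hy
  have hσu : σ b₁ = u₂ := by
    show σ₂ (σ₁ b₁) = u₂
    rw [hσ₁, Equiv.swap_apply_left]
    apply Equiv.swap_apply_of_ne_of_ne
    · intro h
      have : σ₁ b₂ = σ₁ b₁ := by rw [hσ₁, Equiv.swap_apply_left]; exact h.symm
      exact hb12 (σ₁.injective this).symm
    · exact h2
  have hσv : σ b₂ = v₂ := by
    show σ₂ (σ₁ b₂) = v₂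
    rw [hσ₂]
    exact Equiv.swap_apply_left _ _
  -- the map
  set ψ : Fin n → Fin n := fun x =>
    if hx : x ∈ A.erase w then σ (g₀ ⟨x, hx⟩ : Fin n)
    else if hx' : x ∈ B.erase w then (h₀ ⟨x, hx'⟩ : Fin n)
    else x with hψ
  have ψA : ∀ (x) (hx : x ∈ A.erase w), ψ x = σ (g₀ ⟨x, hx⟩ : Fin n) := by
    intro x hx; rw [hψ]; simp [hx]
  have ψB : ∀ (x) (hx' : x ∈ B.erase w), x ∉ A.erase w → ψ x = (h₀ ⟨x, hx'⟩ : Fin n) := by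
    intro x hx' hx; rw [hψ]; simp [hx, hx']
  have ψid : ∀ x, x ∉ A.erase w → x ∉ B.erase w → ψ x = x := by
    intro x hx hx'; rw [hψ]; simp [hx, hx']
  have ψAB : ∀ x, x ∈ A.erase w → ψ x ∈ B := by
    intro x hx; rw [ψA x hx]; exact σB _ (g₀ ⟨x, hx⟩).2
  have ψBA : ∀ (x) (hx' : x ∈ B.erase w), x ∉ A.erase w → ψ x ∈ A := by
    intro x hx' hx; rw [ψB x hx' hx]; exact (h₀ ⟨x, hx'⟩).2
  have notA : ∀ x : Fin n, x ≠ w → x ∉ A.erase w → (x : ℕ) % r ≠ c := by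
    intro x hxw hx hcx
    exact hx (Finset.mem_erase.mpr ⟨hxw, (memA x).mpr hcx⟩)
  have notB : ∀ x : Fin n, x ≠ w → x ∉ B.erase w → (x : ℕ) % r ≠ c' := by
    intro x hxw hx hcx
    exact hx (Finset.mem_erase.mpr ⟨hxw, (memB x).mpr hcx⟩)
  set τ : ℕ → ℕ := fun j => if j = c then c' else if j = c' then c else j with hτ
  have τinj : ∀ a b : ℕ, τ a = τ b → a = b := by
    intro a b
    rw [hτ]
    simp only
    split_ifs <;> omega
  have τclass : ∀ x : Fin n, x ≠ w → (ψ x : ℕ) % r = τ ((x : ℕ) % r) := by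
    intro x hxw
    by_cases hxA : x ∈ A.erase w
    · have hxc : (x : ℕ) % r = c := (memA x).mp (Finset.mem_erase.mp hxA).2
      have : (ψ x : ℕ) % r = c' := (memB _).mp (ψAB x hxA)
      rw [this, hxc, hτ]
      simp
    · by_cases hxB : x ∈ B.erase w
      · have hxc : (x : ℕ) % r = c' := (memB x).mp (Finset.mem_erase.mp hxB).2
        have hne : c' ≠ c := hxc ▸ notA x hxw hxA
        have : (ψ x : ℕ) % r = c := (memA _).mp (ψBA x hxB hxA)
        rw [this, hxc, hτ]
        simp [hne]
      · have h1' : (x : ℕ) % r ≠ c := notA x hxw hxA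
        have h2' : (x : ℕ) % r ≠ c' := notB x hxw hxB
        rw [ψid x hxA hxB, hτ]
        simp [h1', h2']
  have classcond : ∀ x y : Fin n, x ≠ w → y ≠ w → (x : ℕ) % r ≠ (y : ℕ) % r →
      (ψ x : ℕ) % r ≠ (ψ y : ℕ) % r := by
    intro x y hxw hyw hxy
    rw [τclass x hxw, τclass y hyw]
    intro h
    exact hxy (τinj _ _ h)
  refine ⟨ψ, w, fun h => hwu₁ h, fun h => hwv₁ h, ?_, ?_, ?_, classcond⟩
  · -- InjOn
    intro x hx y hy hxy
    simp only [Set.mem_compl_iff, Set.mem_singleton_iff] at hx hy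
    have hcls : (x : ℕ) % r = (y : ℕ) % r := by
      by_contra hne
      exact classcond x y hx hy hne (by rw [hxy])
    by_cases hxc : (x : ℕ) % r = c
    · have hxA : x ∈ A.erase w := Finset.mem_erase.mpr ⟨hx, (memA x).mpr hxc⟩
      have hyA : y ∈ A.erase w := Finset.mem_erase.mpr ⟨hy, (memA y).mpr (hcls ▸ hxc)⟩
      rw [ψA x hxA, ψA y hyA] at hxy
      have := g₀.injective (Subtype.ext (σ.injective hxy))
      exact congrArg Subtype.val this
    · have hxA : x ∉ A.erase w := fun h => hxc ((memA x).mp (Finset.mem_erase.mp h).2)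
      have hyA : y ∉ A.erase w := fun h => hxc (hcls ▸ (memA y).mp (Finset.mem_erase.mp h).2)
      by_cases hxc' : (x : ℕ) % r = c'
      · have hxB : x ∈ B.erase w := Finset.mem_erase.mpr ⟨hx, (memB x).mpr hxc'⟩
        have hyB : y ∈ B.erase w := Finset.mem_erase.mpr ⟨hy, (memB y).mpr (hcls ▸ hxc')⟩
        rw [ψB x hxB hxA, ψB y hyB hyA] at hxy
        have := h₀.injective (Subtype.ext hxy)
        exact congrArg Subtype.val this
      · have hxB : x ∉ B.erase w := fun h => hxc' ((memB x).mp (Finset.mem_erase.mp h).2)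
        have hyB : y ∉ B.erase w := fun h => hxc' (hcls ▸ (memB y).mp (Finset.mem_erase.mp h).2)
        rw [ψid x hxA hxB, ψid y hyA hyB] at hxy
        exact hxy
  · exact ψA u₁ hu₁Aw ▸ hσu
  · exact ψA v₁ hv₁Aw ▸ hσv

end Psi

section Push
variable {α : Type*} {n : ℕ} {F : SimpleGraph α}

/-- Pushing subgraph copies of `F` forward along a map injective off `w`. -/
lemma card_copies_le_of_push (G G₂ : SimpleGraph (Fin n)) (ψ : Fin n → Fin n) (w : Fin n)
    (hinj : Set.InjOn ψ {w}ᶜ)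
    (p : G.Subgraph → Prop)
    (hadj : ∀ H : G.Subgraph, p H → ∀ x y, H.Adj x y → G₂.Adj (ψ x) (ψ y))
    (hw : ∀ H : G.Subgraph, p H → w ∉ H.verts) :
    Nat.card {H : G.Subgraph // Nonempty (F ≃g H.coe) ∧ p H} ≤
      Nat.card {H : G₂.Subgraph // Nonempty (F ≃g H.coe)} := by
  classical
  have hsub : ∀ (H : G.Subgraph), p H → H.verts ⊆ {w}ᶜ := by
    intro H hp x hx h
    rw [Set.mem_singleton_iff] at h
    exact hw H hp (h ▸ hx)
  set Φ : {H : G.Subgraph // Nonempty (F ≃g H.coe) ∧ p H} →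
      {H : G₂.Subgraph // Nonempty (F ≃g H.coe)} := fun ⟨H, hiso, hp⟩ =>
    ⟨{ verts := ψ '' H.verts
       Adj := fun x' y' => ∃ x y, H.Adj x y ∧ ψ x = x' ∧ ψ y = y'
       adj_sub := by rintro x' y' ⟨x, y, hxy, rfl, rfl⟩; exact hadj H hp x y hxy
       edge_vert := by rintro x' y' ⟨x, y, hxy, rfl, rfl⟩; exact ⟨x, H.edge_vert hxy, rfl⟩
       symm := ⟨by rintro x' y' ⟨x, y, hxy, rfl, rfl⟩; exact ⟨y, x, hxy.symm, rfl, rfl⟩⟩ }, by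
      obtain ⟨e⟩ := hiso
      have hHinj : Set.InjOn ψ H.verts := hinj.mono (hsub H hp)
      refine ⟨e.trans ⟨Equiv.Set.imageOfInjOn ψ H.verts hHinj, ?_⟩⟩
      rintro ⟨x, hx⟩ ⟨y, hy⟩
      show (∃ a b, H.Adj a b ∧ ψ a = ψ x ∧ ψ b = ψ y) ↔ H.Adj x y
      constructor
      · rintro ⟨a, b, hab, ha, hb⟩
        have ha' : a = x := hHinj (H.edge_vert hab) hx ha
        have hb' : b = y := hHinj (H.edge_vert hab.symm) hy hb
        rwa [ha', hb'] at hab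
      · intro h
        exact ⟨x, y, h, rfl, rfl⟩⟩
  apply Nat.card_le_card_of_injective Φ
  rintro ⟨H₁, hi₁, hp₁⟩ ⟨H₂, hi₂, hp₂⟩ hΦ
  have hΦ' := congrArg Subtype.val hΦ
  apply Subtype.ext
  have hverts : ψ '' H₁.verts = ψ '' H₂.verts := congrArg SimpleGraph.Subgraph.verts hΦ'
  have hVeq : H₁.verts = H₂.verts := by
    apply Set.eq_of_subset_of_subset
    · intro x hx
      obtain ⟨y, hy, hxy⟩ := hverts ▸ Set.mem_image_of_mem ψ hx
      rwa [← hinj (hsub H₂ hp₂ hy) (hsub H₁ hp₁ hx) hxy]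
    · intro x hx
      obtain ⟨y, hy, hxy⟩ := hverts.symm ▸ Set.mem_image_of_mem ψ hx
      rwa [← hinj (hsub H₁ hp₁ hy) (hsub H₂ hp₂ hx) hxy]
  have hAdj : ∀ x y, H₁.Adj x y ↔ H₂.Adj x y := by
    have hA := congrArg SimpleGraph.Subgraph.Adj hΦ'
    intro x y
    constructor
    · intro h
      have h1 : (↑(Φ ⟨H₁, hi₁, hp₁⟩) : G₂.Subgraph).Adj (ψ x) (ψ y) := ⟨x, y, h, rfl, rfl⟩
      rw [congrFun (congrFun hA (ψ x)) (ψ y)] at h1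
      have : ∃ a b, H₂.Adj a b ∧ ψ a = ψ x ∧ ψ b = ψ y := h1
      obtain ⟨a, b, hab, ha, hb⟩ := this
      have ha' : a = x := hinj (hsub H₂ hp₂ (H₂.edge_vert hab))
        (hsub H₁ hp₁ (H₁.edge_vert h)) ha
      have hb' : b = y := hinj (hsub H₂ hp₂ (H₂.edge_vert hab.symm))
        (hsub H₁ hp₁ (H₁.edge_vert h.symm)) hb
      rwa [ha', hb'] at hab
    · intro h
      have h1 : (↑(Φ ⟨H₂, hi₂, hp₂⟩) : G₂.Subgraph).Adj (ψ x) (ψ y) := ⟨x, y, h, rfl, rfl⟩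
      rw [← congrFun (congrFun hA (ψ x)) (ψ y)] at h1
      have : ∃ a b, H₁.Adj a b ∧ ψ a = ψ x ∧ ψ b = ψ y := h1
      obtain ⟨a, b, hab, ha, hb⟩ := this
      have ha' : a = x := hinj (hsub H₁ hp₁ (H₁.edge_vert hab))
        (hsub H₂ hp₂ (H₂.edge_vert h)) ha
      have hb' : b = y := hinj (hsub H₁ hp₁ (H₁.edge_vert hab.symm))
        (hsub H₂ hp₂ (H₂.edge_vert h.symm)) hb
      rwa [ha', hb'] at hab
  exact SimpleGraph.Subgraph.ext hVeq (by funext x y; exact propext (hAdj x y))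

end Push

section Chrom

lemma no_copy_mod {α : Type*} {F : SimpleGraph α} {k : ℕ} (hk : 3 ≤ k)
    (hchrom : F.chromaticNumber = (k : ℕ∞)) {n : ℕ} {G : SimpleGraph (Fin n)}
    (H : G.Subgraph) (hiso : Nonempty (F ≃g H.coe))
    (hadj : ∀ x y : Fin n, H.Adj x y → ((x : ℕ) % (k-1) : ℕ) ≠ (y : ℕ) % (k-1)) : False := by
  obtain ⟨e⟩ := hiso
  have hpos : 0 < k - 1 := by omega
  have hcol : H.coe.Colorable (k - 1) := by
    refine ⟨⟨fun v => ⟨((v : Fin n) : ℕ) % (k-1), Nat.mod_lt _ hpos⟩, ?_⟩⟩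
    intro a b hab h
    have := hadj a b ((SimpleGraph.Subgraph.coe_adj H a b).mp hab)
    exact this (congrArg Fin.val h)
  have hFcol : F.Colorable (k - 1) := SimpleGraph.Colorable.of_hom e.toEmbedding.toHom hcol
  have := hFcol.chromaticNumber_le
  rw [hchrom] at this
  have : (k : ℕ∞) ≤ (k - 1 : ℕ) := this
  rw [Nat.cast_le] at this
  omega

end Chrom


end AuxiliaryLemmas

/-- adding `s` pairwise disjoint edges inside one part of the Turán graph
`T_{k-1}(n)` produces at most `s·c(n,F) + C'·n^{f-3}` copies of a `k`-critical graph `F`. -/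
theorem stmt_10 {α : Type*} [Fintype α] (k s f : ℕ) (F : SimpleGraph α)
    (hk : 3 ≤ k) (hs : 1 ≤ s) (hF : IsCritical k F) (hf : Fintype.card α = f) :
    ∃ C' : ℝ, ∃ n₀ : ℕ, ∀ n ≥ n₀, ∀ u v : Fin s → Fin n,
      Function.Injective u → Function.Injective v → (∀ i j, u i ≠ v j) →
      (∀ i j : Fin s,
        (u i : ℕ) % (k - 1) = (u j : ℕ) % (k - 1) ∧
        (v i : ℕ) % (k - 1) = (u j : ℕ) % (k - 1)) →
      (copyCount' F (turanGraph n (k - 1) ⊔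
          fromEdgeSet {e : Sym2 (Fin n) | ∃ i, e = s(u i, v i)}) : ℝ) ≤
        (s : ℝ) * cnF k n F + C' * (n : ℝ) ^ (f - 3) := by
  classical
  obtain ⟨hchrom, -⟩ := hF
  refine ⟨(s : ℝ) * (s + 1) * (f : ℝ) ^ 3, 5 * k + 5, ?_⟩
  intro n hn u v hu hv huv hmod
  have hr : 0 < k - 1 := by omega
  have hrn : 5 * (k - 1) ≤ n := by omega
  set T : SimpleGraph (Fin n) := turanGraph n (k - 1) with hT
  set G : SimpleGraph (Fin n) :=
    T ⊔ fromEdgeSet {e : Sym2 (Fin n) | ∃ i, e = s(u i, v i)} with hG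
  have hTadj : ∀ x y : Fin n, T.Adj x y ↔ (x : ℕ) % (k-1) ≠ (y : ℕ) % (k-1) := by
    intro x y; rw [hT]; simp [turanGraph]
  have hGadj : ∀ x y : Fin n, G.Adj x y ↔
      (T.Adj x y ∨ ((∃ i, s(x, y) = s(u i, v i)) ∧ x ≠ y)) := by
    intro x y
    rw [hG]
    simp [SimpleGraph.fromEdgeSet_adj, Set.mem_setOf_eq]
  -- the minimizer pair for cnF
  have hne : ({c | ∃ a b : Fin n, a ≠ b ∧ ¬ (turanGraph n (k - 1)).Adj a b ∧
      c = copyCount' F (turanGraph n (k - 1) ⊔ fromEdgeSet {s(a, b)})}).Nonempty := by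
    refine ⟨_, ⟨⟨0, by omega⟩, ⟨k - 1, by omega⟩, ?_, ?_, rfl⟩⟩
    · intro h
      have := congrArg Fin.val h
      simp only at this
      omega
    · rw [← hT, hTadj]
      simp [Nat.mod_self]
  obtain ⟨u₂, v₂, hab, hnadj, hval⟩ := Nat.sInf_mem hne
  set G₂ : SimpleGraph (Fin n) := turanGraph n (k - 1) ⊔ fromEdgeSet {s(u₂, v₂)} with hG₂
  have hcnF : cnF k n F = copyCount' F G₂ := hval
  have hc₂ : (u₂ : ℕ) % (k-1) = (v₂ : ℕ) % (k-1) := by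
    rw [← hT, hTadj] at hnadj
    exact not_not.mp hnadj
  -- ψ maps (one per added edge)
  have hpsi : ∀ i : Fin s, ∃ (ψ : Fin n → Fin n) (w : Fin n), w ≠ u i ∧ w ≠ v i ∧
      Set.InjOn ψ {w}ᶜ ∧ ψ (u i) = u₂ ∧ ψ (v i) = v₂ ∧
      (∀ x y : Fin n, x ≠ w → y ≠ w → (x : ℕ) % (k-1) ≠ (y : ℕ) % (k-1) →
        (ψ x : ℕ) % (k-1) ≠ (ψ y : ℕ) % (k-1)) :=
    fun i => psi_exists hr hrn (u i) (v i) u₂ v₂ ((hmod i i).2).symm hc₂ (huv i i) hab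
  choose ψ w hwu hwv hinj hpu hpv hcls using hpsi
  -- main counting
  set E : ℕ := f ^ 3 * n ^ (f - 3) with hE
  have key : copyCount' F G ≤ s * cnF k n F + s * (s + 1) * E := by
    have step1 : copyCount' F G ≤
        ∑ i : Fin s, Nat.card {H : G.Subgraph // Nonempty (F ≃g H.coe) ∧ H.Adj (u i) (v i)} := by
      apply nat_card_le_sum
      intro H hiso
      by_contra hno
      push_neg at hno
      apply no_copy_mod hk hchrom H hiso
      intro x y hxy
      rcases (hGadj x y).mp (H.adj_sub hxy) with h | ⟨⟨i, he⟩, hne'⟩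
      · exact (hTadj x y).mp h
      · exfalso
        rcases Sym2.eq_iff.mp he with ⟨rfl, rfl⟩ | ⟨rfl, rfl⟩
        · exact hno i hiso hxy
        · exact hno i hiso hxy.symm
    have per_i : ∀ i : Fin s,
        Nat.card {H : G.Subgraph // Nonempty (F ≃g H.coe) ∧ H.Adj (u i) (v i)} ≤
          cnF k n F + (s + 1) * E := by
      intro i
      have split1 : Nat.card {H : G.Subgraph // Nonempty (F ≃g H.coe) ∧ H.Adj (u i) (v i)} ≤
          Nat.card {H : G.Subgraph // Nonempty (F ≃g H.coe) ∧
            (H.Adj (u i) (v i) ∧ ∃ j, j ≠ i ∧ H.Adj (u j) (v j))} +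
          Nat.card {H : G.Subgraph // Nonempty (F ≃g H.coe) ∧
            (H.Adj (u i) (v i) ∧ ∀ j, j ≠ i → ¬ H.Adj (u j) (v j))} := by
        apply nat_card_le_add
        rintro H ⟨hiso, hadj⟩
        by_cases hj : ∃ j, j ≠ i ∧ H.Adj (u j) (v j)
        · exact Or.inl ⟨hiso, hadj, hj⟩
        · push_neg at hj
          exact Or.inr ⟨hiso, hadj, hj⟩
      have bound1 : Nat.card {H : G.Subgraph // Nonempty (F ≃g H.coe) ∧
            (H.Adj (u i) (v i) ∧ ∃ j, j ≠ i ∧ H.Adj (u j) (v j))} ≤ s * E := by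
        calc Nat.card {H : G.Subgraph // Nonempty (F ≃g H.coe) ∧
            (H.Adj (u i) (v i) ∧ ∃ j, j ≠ i ∧ H.Adj (u j) (v j))} ≤
            ∑ j : Fin s, Nat.card {H : G.Subgraph // Nonempty (F ≃g H.coe) ∧
              (H.Adj (u i) (v i) ∧ j ≠ i ∧ H.Adj (u j) (v j))} := by
              apply nat_card_le_sum
              rintro H ⟨hiso, hadj, j, hji, hadjj⟩
              exact ⟨j, hiso, hadj, hji, hadjj⟩
          _ ≤ ∑ _j : Fin s, E := by
              apply Finset.sum_le_sum
              intro j _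
              by_cases hji : j = i
              · rw [nat_card_eq_zero_of_false (by rintro H ⟨_, _, hji', _⟩; exact hji' hji)]
                exact Nat.zero_le _
              · calc Nat.card {H : G.Subgraph // Nonempty (F ≃g H.coe) ∧
                    (H.Adj (u i) (v i) ∧ j ≠ i ∧ H.Adj (u j) (v j))} ≤
                    Nat.card {H : G.Subgraph // Nonempty (F ≃g H.coe) ∧
                      (u i ∈ H.verts ∧ v i ∈ H.verts ∧ u j ∈ H.verts)} := by
                      apply nat_card_mono
                      rintro H ⟨hiso, hadj, _, hadjj⟩
                      exact ⟨hiso, H.edge_vert hadj, H.edge_vert hadj.symm, H.edge_vert hadjj⟩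
                  _ ≤ E := by
                      rw [hE]
                      exact copies_three_le G f hf (u i) (v i) (u j) (huv i i)
                        (fun h => hji (hu h.symm)) (fun h => huv j i h.symm)
          _ = s * E := by rw [Finset.sum_const, Finset.card_univ, Fintype.card_fin, smul_eq_mul]
      have split2 : Nat.card {H : G.Subgraph // Nonempty (F ≃g H.coe) ∧
            (H.Adj (u i) (v i) ∧ ∀ j, j ≠ i → ¬ H.Adj (u j) (v j))} ≤
          Nat.card {H : G.Subgraph // Nonempty (F ≃g H.coe) ∧
            (u i ∈ H.verts ∧ v i ∈ H.verts ∧ w i ∈ H.verts)} +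
          Nat.card {H : G.Subgraph // Nonempty (F ≃g H.coe) ∧
            (H.Adj (u i) (v i) ∧ (∀ j, j ≠ i → ¬ H.Adj (u j) (v j)) ∧ w i ∉ H.verts)} := by
        apply nat_card_le_add
        rintro H ⟨hiso, hadj, hno⟩
        by_cases hwmem : w i ∈ H.verts
        · exact Or.inl ⟨hiso, H.edge_vert hadj, H.edge_vert hadj.symm, hwmem⟩
        · exact Or.inr ⟨hiso, hadj, hno, hwmem⟩
      have bound2a : Nat.card {H : G.Subgraph // Nonempty (F ≃g H.coe) ∧
            (u i ∈ H.verts ∧ v i ∈ H.verts ∧ w i ∈ H.verts)} ≤ E := by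
        rw [hE]
        exact copies_three_le G f hf (u i) (v i) (w i) (huv i i)
          (fun h => hwu i h.symm) (fun h => hwv i h.symm)
      have bound2b : Nat.card {H : G.Subgraph // Nonempty (F ≃g H.coe) ∧
            (H.Adj (u i) (v i) ∧ (∀ j, j ≠ i → ¬ H.Adj (u j) (v j)) ∧ w i ∉ H.verts)} ≤
          cnF k n F := by
        rw [hcnF]
        apply card_copies_le_of_push G G₂ (ψ i) (w i) (hinj i)
        · -- adjacency is preserved
          rintro H ⟨hadji, hno, hwv'⟩ x y hxy
          have hxw : x ≠ w i := fun h => hwv' (h ▸ H.edge_vert hxy)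
          have hyw : y ≠ w i := fun h => hwv' (h ▸ H.edge_vert hxy.symm)
          rcases (hGadj x y).mp (H.adj_sub hxy) with h | ⟨⟨j, he⟩, hne'⟩
          · rw [hG₂]
            refine (SimpleGraph.sup_adj _ _ _ _).mpr (Or.inl ?_)
            have h2 := hcls i x y hxw hyw ((hTadj x y).mp h)
            rw [← hT, hTadj]
            exact h2
          · rcases Sym2.eq_iff.mp he with ⟨rfl, rfl⟩ | ⟨rfl, rfl⟩
            · have hji : j = i := by
                by_contra hji
                exact hno j hji hxy
              subst hji
              rw [hpu j, hpv j, hG₂]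
              exact (SimpleGraph.sup_adj _ _ _ _).mpr
                (Or.inr ((SimpleGraph.fromEdgeSet_adj _).mpr ⟨Set.mem_singleton _, hab⟩))
            · have hji : j = i := by
                by_contra hji
                exact hno j hji hxy.symm
              subst hji
              rw [hpv j, hpu j, hG₂]
              exact ((SimpleGraph.sup_adj _ _ _ _).mpr
                (Or.inr ((SimpleGraph.fromEdgeSet_adj _).mpr ⟨Set.mem_singleton _, hab⟩))).symm
        · rintro H ⟨_, _, hwv'⟩
          exact hwv'
      calc Nat.card {H : G.Subgraph // Nonempty (F ≃g H.coe) ∧ H.Adj (u i) (v i)} ≤ _ := split1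
        _ ≤ s * E + (E + cnF k n F) := by
            have := le_trans split2 (Nat.add_le_add bound2a bound2b)
            omega
        _ = cnF k n F + (s + 1) * E := by ring
    calc copyCount' F G ≤ _ := step1
      _ ≤ ∑ _i : Fin s, (cnF k n F + (s + 1) * E) := Finset.sum_le_sum (fun i _ => per_i i)
      _ = s * cnF k n F + s * (s + 1) * E := by
          rw [Finset.sum_const, Finset.card_univ, Fintype.card_fin, smul_eq_mul]
          ring
  -- conclude over ℝ
  rw [hE] at key
  have hreal : ((copyCount' F G : ℕ) : ℝ) ≤
      ((s * cnF k n F + s * (s + 1) * (f ^ 3 * n ^ (f - 3)) : ℕ) : ℝ) := Nat.cast_le.mpr key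
  push_cast at hreal
  refine le_trans hreal (le_of_eq ?_)
  ring
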